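/- Let C be a covering of a finite nonempty set U. Then SL(X ∩ Y) = SL(X) ∩ SL(Y) for all X, Y ⊆ U if and only if C is unary. -/

import Mathlib

open Set

/-- A covering of a finite nonempty universe `α`: a family of nonempty subsets whose union is everything. -/
def IsCovering {α : Type*} (C : Set (Set α)) : Prop :=
  (∀ K ∈ C, K.Nonempty) ∧ ⋃₀ C = Set.univ

/-- The second type of covering lower approximation. -/
def SL {α : Type*} (C : Set (Set α)) (X : Set α) : Set α :=
  ⋃₀ {K | K ∈ C ∧ K ⊆ X}

/-- The second type of covering upper approximation. -/
def SH {α : Type*} (C : Set (Set α)) (X : Set α) : Set α :=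
  ⋃₀ {K | K ∈ C ∧ (K ∩ X).Nonempty}

/-- The minimal description of a point. -/
def Md {α : Type*} (C : Set (Set α)) (x : α) : Set (Set α) :=
  {K | K ∈ C ∧ x ∈ K ∧ ∀ S ∈ C, x ∈ S → S ⊆ K → S = K}

/-- A covering is unary if every point has exactly one element in its minimal description. -/
def Unary {α : Type*} (C : Set (Set α)) : Prop :=
  ∀ x : α, ∃! K, K ∈ Md C x

/-- The neighborhood of a point. -/
def Nbhd {α : Type*} (C : Set (Set α)) (x : α) : Set α :=
  ⋂₀ {K | K ∈ C ∧ x ∈ K}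

/-- The indiscernible neighborhood of a point. -/
def IndNbhd {α : Type*} (C : Set (Set α)) (x : α) : Set α :=
  ⋃₀ {K | K ∈ C ∧ x ∈ K}

/-- A member of the covering is reducible if it is a union of other members. -/
def Reducible {α : Type*} (C : Set (Set α)) (K : Set α) : Prop :=
  ∃ D ⊆ C \ {K}, K = ⋃₀ D

/-- The reduct of a covering: its irreducible members. -/
def reduct {α : Type*} (C : Set (Set α)) : Set (Set α) :=
  {K | K ∈ C ∧ ¬ Reducible C K}

/-- The closure operator induced by the fixed point family of `SL`. -/
def clC {α : Type*} (C : Set (Set α)) (X : Set α) : Set α :=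
  ⋂₀ {S | SL C S = S ∧ X ⊆ S}

lemma exists_md {α : Type*} [Fintype α] (C : Set (Set α)) {x : α} {K : Set α}
    (hK : K ∈ C) (hx : x ∈ K) : ∃ M ∈ Md C x, M ⊆ K := by
  obtain ⟨M, hM, hmin⟩ := Set.Finite.exists_minimalFor id {S | S ∈ C ∧ x ∈ S ∧ S ⊆ K}
    (Set.toFinite _) ⟨K, hK, hx, subset_rfl⟩
  refine ⟨M, ⟨hM.1, hM.2.1, fun S hS hxS hSM => ?_⟩, hM.2.2⟩
  exact hSM.antisymm (hmin ⟨hS, hxS, hSM.trans hM.2.2⟩ hSM)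

theorem stmt_13 {α : Type*} [Fintype α] [Nonempty α] (C : Set (Set α))
    (hC : IsCovering C) :
    (∀ X Y : Set α, SL C (X ∩ Y) = SL C X ∩ SL C Y) ↔ Unary C := by
  constructor
  · intro h x
    have hx : x ∈ ⋃₀ C := hC.2.symm ▸ Set.mem_univ x
    obtain ⟨K, hK, hxK⟩ := hx
    obtain ⟨M, hM, _⟩ := exists_md C hK hxK
    refine ⟨M, hM, fun K₂ hK₂ => ?_⟩
    have h1 : x ∈ SL C K₂ := ⟨K₂, ⟨hK₂.1, subset_rfl⟩, hK₂.2.1⟩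
    have h2 : x ∈ SL C M := ⟨M, ⟨hM.1, subset_rfl⟩, hM.2.1⟩
    have : x ∈ SL C (K₂ ∩ M) := (h K₂ M).symm ▸ ⟨h1, h2⟩
    obtain ⟨S, ⟨hS, hSsub⟩, hxS⟩ := this
    have e1 := hK₂.2.2 S hS hxS (hSsub.trans Set.inter_subset_left)
    have e2 := hM.2.2 S hS hxS (hSsub.trans Set.inter_subset_right)
    rw [← e1, e2]
  · intro h X Y
    apply Set.Subset.antisymm
    · apply Set.subset_inter
      · exact fun z ⟨S, ⟨hS, hsub⟩, hz⟩ => ⟨S, ⟨hS, hsub.trans Set.inter_subset_left⟩, hz⟩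
      · exact fun z ⟨S, ⟨hS, hsub⟩, hz⟩ => ⟨S, ⟨hS, hsub.trans Set.inter_subset_right⟩, hz⟩
    · rintro x ⟨⟨K₁, ⟨hK₁, hK₁X⟩, hxK₁⟩, ⟨K₂, ⟨hK₂, hK₂Y⟩, hxK₂⟩⟩
      obtain ⟨M, hM, hMuniq⟩ := h x
      obtain ⟨M₁, hM₁, hM₁sub⟩ := exists_md C hK₁ hxK₁
      obtain ⟨M₂, hM₂, hM₂sub⟩ := exists_md C hK₂ hxK₂
      rw [hMuniq M₁ hM₁] at hM₁sub
      rw [hMuniq M₂ hM₂] at hM₂sub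
      exact ⟨M, ⟨hM.1, Set.subset_inter (hM₁sub.trans hK₁X) (hM₂sub.trans hK₂Y)⟩, hM.2.1⟩
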